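/- The function H_l is strictly decreasing on [1, Ψ(f₀)) and strictly increasing on (Ψ(f₀), ∞). -/

import Mathlib

/-- H_l is strictly decreasing on [1, Ψ(f₀)) and strictly increasing on
(Ψ(f₀), ∞). -/
theorem stmt_2 (α δ lam : ℝ) (hα : 0 < α) (hδ : 0 < δ) (hlam : 0 < lam)
    (hltd : lam < α * δ)
    (f₀ : ℝ)
    (hf₀ : f₀ = (1 / Real.sqrt (2 * α)) * (Real.sqrt ((α * δ + lam) / (α * δ - lam)) - 1))
    (Ψ : ℝ → ℝ) (hΨ : ∀ x, Ψ x = Real.exp (2 * Real.sqrt (2 * α) * x))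
    (Hl : ℝ → ℝ)
    (hHl : ∀ y, 0 < y → Hl y = Real.sqrt y *
      (-(lam / α ^ 2) + ((δ - lam / α) / (8 * α)) * (Real.log y) ^ 2))
    (hHl0 : Hl 0 = 0) :
    StrictAntiOn Hl (Set.Ico 1 (Ψ f₀)) ∧ StrictMonoOn Hl (Set.Ioi (Ψ f₀)) := by
  set A : ℝ := -(lam / α ^ 2) with hA
  set c : ℝ := (δ - lam / α) / (8 * α) with hc
  set g : ℝ → ℝ := fun y => Real.sqrt y * (A + c * (Real.log y) ^ 2) with hg
  have hαδ : 0 < α * δ - lam := by linarith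
  have hcpos : 0 < c := by
    rw [hc]
    apply div_pos _ (by linarith)
    rw [sub_pos, div_lt_iff₀ hα]
    linarith [mul_comm δ α]
  set r : ℝ := (α * δ + lam) / (α * δ - lam) with hr
  set s₀ : ℝ := Real.sqrt r with hs₀
  have hrpos : 0 < r := div_pos (by linarith) hαδ
  have hs₀sq : s₀ ^ 2 = r := Real.sq_sqrt hrpos.le
  have hr1 : 1 < r := by
    rw [hr, lt_div_iff₀ hαδ]; linarith
  have hs₀1 : 1 < s₀ := by nlinarith [Real.sqrt_nonneg r]
  have hAc : A = c * (4 - 4 * s₀ ^ 2) := by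
    rw [hs₀sq, hA, hc, hr]
    field_simp
    ring
  have hsqrt2α : 0 < Real.sqrt (2 * α) := Real.sqrt_pos.mpr (by linarith)
  have hΨf₀ : Ψ f₀ = Real.exp (2 * (s₀ - 1)) := by
    rw [hΨ, hf₀]
    congr 1
    field_simp
  have hΨpos : 0 < Ψ f₀ := by rw [hΨf₀]; exact Real.exp_pos _
  have hΨgt1 : 1 < Ψ f₀ := by
    rw [hΨf₀, Real.one_lt_exp_iff]; linarith
  -- derivative of g
  have hderiv : ∀ y : ℝ, 0 < y → HasDerivAt g
      ((c * (Real.log y) ^ 2 + 4 * c * Real.log y + A) / (2 * Real.sqrt y)) y := by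
    intro y hy
    have hsy : 0 < Real.sqrt y := Real.sqrt_pos.mpr hy
    have h1 : HasDerivAt Real.sqrt (1 / (2 * Real.sqrt y)) y :=
      Real.hasDerivAt_sqrt hy.ne'
    have h2 : HasDerivAt (fun x => A + c * (Real.log x) ^ 2)
        (c * (2 * Real.log y ^ 1 * y⁻¹)) y :=
      (((Real.hasDerivAt_log hy.ne').pow 2).const_mul c).const_add A
    have h3 := h1.mul h2
    refine (h3 : HasDerivAt g _ y).congr_deriv (Eq.symm ?_)
    have hsq : Real.sqrt y ^ 2 = y := Real.sq_sqrt hy.le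
    have h4 : Real.sqrt y * Real.sqrt y = y := Real.mul_self_sqrt hy.le
    field_simp
    ring_nf
    rw [hsq]
  -- sign of the quadratic
  have hqneg : ∀ L : ℝ, 0 < L → L < 2 * (s₀ - 1) →
      c * L ^ 2 + 4 * c * L + A < 0 := by
    intro L h1 h2
    have f1 : 0 < 2 * s₀ - (L + 2) := by linarith
    have f2 : 0 < L + 2 + 2 * s₀ := by linarith
    nlinarith [mul_pos hcpos (mul_pos f1 f2)]
  have hqpos : ∀ L : ℝ, 2 * (s₀ - 1) < L →
      c * L ^ 2 + 4 * c * L + A > 0 := by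
    intro L h2
    have f1 : 0 < L + 2 - 2 * s₀ := by linarith
    have f2 : 0 < L + 2 + 2 * s₀ := by linarith
    nlinarith [mul_pos hcpos (mul_pos f1 f2)]
  -- continuity of g on sets of positives
  have hcont : ∀ s : Set ℝ, (∀ x ∈ s, 0 < x) → ContinuousOn g s := by
    intro s hs
    apply ContinuousOn.mul Real.continuous_sqrt.continuousOn
    apply ContinuousOn.add continuousOn_const
    exact continuousOn_const.mul
      ((Real.continuousOn_log.mono fun x hx => (hs x hx).ne').pow 2)
  have hganti : StrictAntiOn g (Set.Ico 1 (Ψ f₀)) := by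
    apply strictAntiOn_of_deriv_neg (convex_Ico _ _)
      (hcont _ fun x hx => lt_of_lt_of_le one_pos hx.1)
    intro x hx
    rw [interior_Ico] at hx
    have hx0 : 0 < x := lt_trans one_pos hx.1
    rw [(hderiv x hx0).deriv]
    apply div_neg_of_neg_of_pos _ (by positivity)
    apply hqneg _ (Real.log_pos hx.1)
    rw [Real.log_lt_iff_lt_exp hx0]
    rw [hΨf₀] at hx
    exact hx.2
  have hgmono : StrictMonoOn g (Set.Ioi (Ψ f₀)) := by
    apply strictMonoOn_of_deriv_pos (convex_Ioi _)
      (hcont _ fun x hx => lt_trans hΨpos hx)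
    intro x hx
    rw [interior_Ioi] at hx
    have hx0 : 0 < x := lt_trans hΨpos hx
    rw [(hderiv x hx0).deriv]
    apply div_pos _ (by positivity)
    apply hqpos
    rw [Real.lt_log_iff_exp_lt hx0]
    rw [hΨf₀] at hx
    exact hx
  constructor
  · intro a ha b hb hab
    rw [hHl a (lt_of_lt_of_le one_pos ha.1), hHl b (lt_of_lt_of_le one_pos hb.1)]
    exact hganti ha hb hab
  · intro a ha b hb hab
    rw [hHl a (lt_trans hΨpos ha), hHl b (lt_trans hΨpos hb)]
    exact hgmono ha hb hab
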